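/- arXiv:2511.05907 — 2 statements merged into one kernel-verified Lean document; each statement's English description precedes it below -/
import Mathlib

section
/- Let 0 ≤ s₁ < s₂ ≤ k be integers and define β(s) = 1 if s₁ ≤ (s mod k) < s₂ and β(s) = 0 otherwise. Then β has a finite Fourier expansion β(s) = ∑_{j=0}^{k−1} β_j e^{2πi s j / k} with coefficients β_j = (1/k) ∑_{s=0}^{k−1} β(s) e^{−2πi s j / k}, and ∑_{j=0}^{k−1} |β_j| = O(k^ε) for every ε > 0. -/
open Finset Complex

/-- The indicator `β(s) = 1` if `s₁ ≤ (s mod k) < s₂`, else `0`. -/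
noncomputable def betaInd (k : ℕ) (s₁ s₂ : ℤ) (s : ℤ) : ℂ :=
  if s₁ ≤ s % (k : ℤ) ∧ s % (k : ℤ) < s₂ then 1 else 0

/-- The finite Fourier coefficients of `β`. -/
noncomputable def betaCoeff (k : ℕ) (s₁ s₂ : ℤ) (j : ℕ) : ℂ :=
  (1 / (k : ℂ)) * ∑ s ∈ Finset.range k,
    betaInd k s₁ s₂ s * Complex.exp (-(2 * (Real.pi : ℂ) * Complex.I * s * j) / k)

lemma ortho (k : ℕ) (hk : 0 < k) (m : ℤ) :
    ∑ j ∈ Finset.range k, Complex.exp (2 * (Real.pi : ℂ) * Complex.I * m * j / k)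
      = if (k : ℤ) ∣ m then (k : ℂ) else 0 := by
  have hkC : (k : ℂ) ≠ 0 := Nat.cast_ne_zero.mpr hk.ne'
  set z : ℂ := Complex.exp (2 * (Real.pi : ℂ) * Complex.I * m / k) with hz
  have hpow : ∀ j : ℕ, Complex.exp (2 * (Real.pi : ℂ) * Complex.I * m * j / k) = z ^ j := by
    intro j
    rw [hz, ← Complex.exp_nat_mul]
    congr 1
    ring
  simp_rw [hpow]
  by_cases hdvd : (k : ℤ) ∣ m
  · have hz1 : z = 1 := by
      obtain ⟨n, hn⟩ := hdvd
      rw [hz, hn]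
      have : 2 * (Real.pi : ℂ) * Complex.I * (((k : ℤ) * n : ℤ) : ℂ) / k = (n : ℤ) * (2 * Real.pi * Complex.I) := by
        push_cast
        field_simp
      rw [this, Complex.exp_int_mul_two_pi_mul_I]
    simp [hz1, hdvd]
  · have hz1 : z ≠ 1 := by
      intro h
      rw [hz, Complex.exp_eq_one_iff] at h
      obtain ⟨n, hn⟩ := h
      apply hdvd
      refine ⟨n, ?_⟩
      have h2 : (2 : ℂ) * Real.pi * Complex.I ≠ 0 := by
        simp [Real.pi_ne_zero, Complex.I_ne_zero]
      have hn' : 2 * (Real.pi : ℂ) * Complex.I * m / k = n * (2 * Real.pi * Complex.I) := hn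
      field_simp at hn'
      have h3 : (2:ℂ) * Real.pi * Complex.I * m = 2 * Real.pi * Complex.I * ((k:ℂ) * n) := by
        linear_combination (2 * (Real.pi : ℂ) * Complex.I) * hn'
      have : (m : ℂ) = (k : ℂ) * n := mul_left_cancel₀ h2 h3
      exact_mod_cast this
    rw [geom_sum_eq hz1]
    have hzk : z ^ k = 1 := by
      rw [hz, ← Complex.exp_nat_mul]
      have : (k : ℂ) * (2 * Real.pi * Complex.I * m / k) = (m : ℤ) * (2 * Real.pi * Complex.I) := by
        field_simp
      rw [this, Complex.exp_int_mul_two_pi_mul_I]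
    rw [hzk]
    simp [hdvd]

lemma norm_exp_real_mul_I_sub_one (θ : ℝ) :
    ‖Complex.exp ((θ : ℂ) * Complex.I) - 1‖ = 2 * |Real.sin (θ / 2)| := by
  rw [Complex.norm_def]
  have hre : (Complex.exp ((θ : ℂ) * Complex.I) - 1).re = Real.cos θ - 1 := by
    rw [Complex.sub_re, Complex.exp_ofReal_mul_I_re]; simp
  have him : (Complex.exp ((θ : ℂ) * Complex.I) - 1).im = Real.sin θ := by
    rw [Complex.sub_im, Complex.exp_ofReal_mul_I_im]; simp
  have hnsq : Complex.normSq (Complex.exp ((θ : ℂ) * Complex.I) - 1)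
      = (2 * |Real.sin (θ / 2)|) ^ 2 := by
    rw [Complex.normSq_apply, hre, him]
    have h1 := Real.sin_sq_eq_half_sub (θ / 2)
    rw [show 2 * (θ / 2) = θ by ring] at h1
    have h2 := Real.sin_sq_add_cos_sq θ
    have h3 : |Real.sin (θ / 2)| ^ 2 = Real.sin (θ / 2) ^ 2 := sq_abs _
    nlinarith
  rw [hnsq, Real.sqrt_sq (by positivity)]

lemma sin_lb (k j : ℕ) (hk : 0 < k) (hj : 0 < j) (hjk : j < k) :
    2 * ((min j (k - j) : ℕ) : ℝ) / k ≤ Real.sin (Real.pi * j / k) := by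
  have hk0 : (0:ℝ) < k := by exact_mod_cast hk
  have hpi := Real.pi_pos
  rcases le_or_gt (2 * j) k with hle | hlt
  · have hmin : min j (k - j) = j := by omega
    rw [hmin]
    have h1 : Real.pi * j / k ≤ Real.pi / 2 := by
      rw [div_le_div_iff₀ hk0 two_pos]
      have : (2 * j : ℝ) ≤ k := by exact_mod_cast hle
      nlinarith
    have h2 : (0:ℝ) ≤ Real.pi * j / k := by positivity
    have := Real.mul_le_sin h2 h1
    calc 2 * (j:ℝ) / k = 2 / Real.pi * (Real.pi * j / k) := by
          field_simp
      _ ≤ Real.sin (Real.pi * j / k) := this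
  · have hmin : min j (k - j) = k - j := by omega
    rw [hmin]
    have hcast : ((k - j : ℕ) : ℝ) = (k : ℝ) - j := by
      rw [Nat.cast_sub hjk.le]
    have hsin : Real.sin (Real.pi * j / k) = Real.sin (Real.pi * ((k:ℝ) - j) / k) := by
      rw [show Real.pi * ((k:ℝ) - j) / k = Real.pi - Real.pi * j / k by field_simp,
        Real.sin_pi_sub]
    rw [hsin, hcast]
    have h1 : Real.pi * ((k:ℝ) - j) / k ≤ Real.pi / 2 := by
      rw [div_le_div_iff₀ hk0 two_pos]
      have : (k:ℝ) < 2 * j := by exact_mod_cast hlt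
      nlinarith
    have h2 : (0:ℝ) ≤ Real.pi * ((k:ℝ)-j) / k := by
      have : (j:ℝ) ≤ k := by exact_mod_cast hjk.le
      apply div_nonneg ?_ hk0.le
      nlinarith [Real.pi_pos]
    have := Real.mul_le_sin h2 h1
    calc 2 * ((k:ℝ) - j) / k = 2 / Real.pi * (Real.pi * ((k:ℝ) - j) / k) := by
          field_simp
      _ ≤ Real.sin (Real.pi * ((k:ℝ) - j) / k) := this

lemma coeff_le_one (k : ℕ) (s₁ s₂ : ℤ) (j : ℕ) (hk : 0 < k) :
    ‖betaCoeff k s₁ s₂ j‖ ≤ 1 := by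
  have hk0 : (0:ℝ) < k := by exact_mod_cast hk
  rw [betaCoeff]
  rw [norm_mul]
  have h1 : ‖(1 / (k:ℂ))‖ = 1 / (k:ℝ) := by
    simp
  rw [h1]
  have h2 : ‖∑ s ∈ Finset.range k, betaInd k s₁ s₂ s *
      Complex.exp (-(2 * (Real.pi : ℂ) * Complex.I * s * j) / k)‖ ≤ (k:ℝ) := by
    calc ‖∑ s ∈ Finset.range k, betaInd k s₁ s₂ s *
        Complex.exp (-(2 * (Real.pi : ℂ) * Complex.I * s * j) / k)‖
        ≤ ∑ s ∈ Finset.range k, ‖betaInd k s₁ s₂ s *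
          Complex.exp (-(2 * (Real.pi : ℂ) * Complex.I * s * j) / k)‖ := norm_sum_le _ _
      _ ≤ ∑ s ∈ Finset.range k, 1 := by
          refine Finset.sum_le_sum fun t _ => ?_
          rw [norm_mul]
          have hb : ‖betaInd k s₁ s₂ t‖ ≤ 1 := by
            rw [betaInd]
            split <;> simp
          have he : ‖Complex.exp (-(2 * (Real.pi : ℂ) * Complex.I * t * j) / k)‖ = 1 := by
            rw [show -(2 * (Real.pi : ℂ) * Complex.I * t * j) / k
                = ((-(2 * Real.pi * t * j / k) : ℝ) : ℂ) * Complex.I by push_cast; ring]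
            exact Complex.norm_exp_ofReal_mul_I _
          rw [he, mul_one]
          exact hb
      _ = (k:ℝ) := by simp
  calc 1 / (k:ℝ) * ‖_‖ ≤ 1 / (k:ℝ) * k := by
        exact mul_le_mul_of_nonneg_left h2 (by positivity)
    _ = 1 := by field_simp

lemma coeff_le_min (k : ℕ) (s₁ s₂ : ℤ) (j : ℕ) (hk : 0 < k)
    (h1 : 0 ≤ s₁) (h12 : s₁ < s₂) (h2 : s₂ ≤ (k:ℤ)) (hj : 0 < j) (hjk : j < k) :
    ‖betaCoeff k s₁ s₂ j‖ ≤ 1 / (2 * ((min j (k - j) : ℕ) : ℝ)) := by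
  have hk0 : (0:ℝ) < k := by exact_mod_cast hk
  set a : ℕ := s₁.toNat with ha
  set b : ℕ := s₂.toNat with hb
  have haZ : (a : ℤ) = s₁ := Int.toNat_of_nonneg h1
  have hbZ : (b : ℤ) = s₂ := Int.toNat_of_nonneg (by omega)
  have hab : a < b := by omega
  have hbk : b ≤ k := by omega
  set z : ℂ := Complex.exp (((-(2 * Real.pi * j / k) : ℝ) : ℂ) * Complex.I) with hz
  have hznorm : ‖z‖ = 1 := Complex.norm_exp_ofReal_mul_I _
  have hzsub : ‖z - 1‖ = 2 * Real.sin (Real.pi * j / k) := by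
    rw [hz, norm_exp_real_mul_I_sub_one]
    rw [show -(2 * Real.pi * j / k) / 2 = -(Real.pi * j / k) by ring, Real.sin_neg, abs_neg]
    congr 1
    apply _root_.abs_of_nonneg
    apply Real.sin_nonneg_of_nonneg_of_le_pi (by positivity)
    rw [div_le_iff₀ hk0]
    have : (j:ℝ) ≤ k := by exact_mod_cast hjk.le
    nlinarith [Real.pi_pos]
  have hsin : 2 * ((min j (k - j) : ℕ) : ℝ) / k ≤ Real.sin (Real.pi * j / k) :=
    sin_lb k j hk hj hjk
  have hmin0 : (0:ℝ) < ((min j (k - j) : ℕ) : ℝ) := by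
    have : 0 < min j (k - j) := by omega
    exact_mod_cast this
  have hsinpos : 0 < Real.sin (Real.pi * j / k) := lt_of_lt_of_le (by positivity) hsin
  have hz1 : z ≠ 1 := by
    intro h
    rw [h] at hzsub
    simp at hzsub
    linarith
  -- rewrite the sum
  have hS : ∑ s ∈ Finset.range k, betaInd k s₁ s₂ s *
      Complex.exp (-(2 * (Real.pi : ℂ) * Complex.I * s * j) / k)
      = ∑ t ∈ Finset.Ico a b, z ^ t := by
    have step1 : ∀ t ∈ Finset.range k, betaInd k s₁ s₂ t *
        Complex.exp (-(2 * (Real.pi : ℂ) * Complex.I * t * j) / k)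
        = if a ≤ t ∧ t < b then z ^ t else 0 := by
      intro t htmem
      have htlt : t < k := Finset.mem_range.mp htmem
      have hmod : (t : ℤ) % k = t := Int.emod_eq_of_lt (by positivity) (by exact_mod_cast htlt)
      have hzt : Complex.exp (-(2 * (Real.pi : ℂ) * Complex.I * t * j) / k) = z ^ t := by
        rw [hz, ← Complex.exp_nat_mul]
        congr 1
        push_cast
        ring
      rw [betaInd, hmod, hzt]
      have hiff : (s₁ ≤ (t:ℤ) ∧ (t:ℤ) < s₂) ↔ (a ≤ t ∧ t < b) := by omega
      by_cases hc : a ≤ t ∧ t < b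
      · rw [if_pos (hiff.mpr hc), if_pos hc, one_mul]
      · rw [if_neg (fun hh => hc (hiff.mp hh)), if_neg hc, zero_mul]
    rw [Finset.sum_congr rfl step1, Finset.sum_ite, Finset.sum_const_zero, add_zero]
    congr 1
    ext t
    simp only [Finset.mem_filter, Finset.mem_range, Finset.mem_Ico]
    omega
  have hz1pos : 0 < ‖z - 1‖ := by rw [hzsub]; linarith
  have hSnorm : ‖∑ t ∈ Finset.Ico a b, z ^ t‖ ≤ 2 / ‖z - 1‖ := by
    rw [geom_sum_Ico hz1 hab.le, norm_div]
    gcongr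
    calc ‖z ^ b - z ^ a‖ ≤ ‖z ^ b‖ + ‖z ^ a‖ := norm_sub_le _ _
      _ = 2 := by rw [norm_pow, norm_pow, hznorm]; norm_num
  set M : ℝ := ((min j (k - j) : ℕ) : ℝ) with hM
  calc ‖betaCoeff k s₁ s₂ j‖
      = 1 / (k:ℝ) * ‖∑ t ∈ Finset.Ico a b, z ^ t‖ := by
        rw [betaCoeff, norm_mul, hS]
        simp
    _ ≤ 1 / (k:ℝ) * (2 / ‖z - 1‖) := by gcongr
    _ = 1 / (k:ℝ) * (1 / Real.sin (Real.pi * j / k)) := by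
        rw [hzsub]
        rw [show (2:ℝ) / (2 * Real.sin (Real.pi * j / k)) = 1 / Real.sin (Real.pi * j / k) by
          field_simp]
    _ ≤ 1 / (k:ℝ) * ((k:ℝ) / (2 * M)) := by
        gcongr 1 / (k:ℝ) * ?_
        rw [div_le_div_iff₀ hsinpos (by positivity)]
        rw [div_le_iff₀ hk0] at hsin
        nlinarith
    _ = 1 / (2 * M) := by field_simp

lemma sum_bound (k : ℕ) (s₁ s₂ : ℤ) (hk : 0 < k)
    (h1 : 0 ≤ s₁) (h12 : s₁ < s₂) (h2 : s₂ ≤ (k:ℤ)) :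
    ∑ j ∈ Finset.range k, ‖betaCoeff k s₁ s₂ j‖ ≤ 2 + Real.log k := by
  have hsplit : Finset.range k = insert 0 (Finset.Ico 1 k) := by
    ext t; simp [Finset.mem_Ico, Finset.mem_range]; omega
  rw [hsplit, Finset.sum_insert (by simp)]
  have hA : ∑ j ∈ Finset.Ico 1 k, ‖betaCoeff k s₁ s₂ j‖
      ≤ ∑ j ∈ Finset.Ico 1 k, (1 / (2 * (j:ℝ)) + 1 / (2 * ((k - j : ℕ):ℝ))) := by
    refine Finset.sum_le_sum fun j hj => ?_
    rw [Finset.mem_Ico] at hj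
    refine (coeff_le_min k s₁ s₂ j hk h1 h12 h2 hj.1 hj.2).trans ?_
    have hj1 : (0:ℝ) < (j:ℝ) := by exact_mod_cast hj.1
    have hkj : (0:ℝ) < ((k - j : ℕ):ℝ) := by
      have : 0 < k - j := by omega
      exact_mod_cast this
    rcases min_cases j (k - j) with ⟨hmin, _⟩ | ⟨hmin, _⟩ <;> rw [hmin]
    · have : (0:ℝ) ≤ 1 / (2 * ((k - j : ℕ):ℝ)) := by positivity
      linarith
    · have : (0:ℝ) ≤ 1 / (2 * (j:ℝ)) := by positivity
      linarith
  have hrefl : ∑ j ∈ Finset.Ico 1 k, (1 / (2 * ((k - j : ℕ):ℝ)))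
      = ∑ j ∈ Finset.Ico 1 k, 1 / (2 * (j:ℝ)) := by
    rw [Finset.sum_Ico_eq_sum_range, Finset.sum_Ico_eq_sum_range]
    rw [← Finset.sum_range_reflect]
    refine Finset.sum_congr rfl fun i hi => ?_
    rw [Finset.mem_range] at hi
    congr 2
    have : k - (1 + (k - 1 - 1 - i)) = 1 + i := by omega
    rw [this]
  have hhalf : ∑ j ∈ Finset.Ico 1 k, 1 / (2 * (j:ℝ)) ≤ (1/2) * (harmonic k : ℝ) := by
    have hcast : (harmonic k : ℝ) = ∑ i ∈ Finset.range k, 1 / ((i:ℝ) + 1) := by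
      rw [harmonic]
      push_cast
      refine Finset.sum_congr rfl fun i _ => ?_
      rw [one_div]
    rw [hcast, Finset.mul_sum, Finset.sum_Ico_eq_sum_range]
    calc ∑ i ∈ Finset.range (k - 1), 1 / (2 * ((1 + i : ℕ):ℝ))
        ≤ ∑ i ∈ Finset.range k, 1 / (2 * ((1 + i : ℕ):ℝ)) :=
          Finset.sum_le_sum_of_subset_of_nonneg
            (Finset.range_subset_range.mpr (by omega)) (fun i _ _ => by positivity)
      _ = ∑ i ∈ Finset.range k, 1 / 2 * (1 / ((i:ℝ) + 1)) := by
          refine Finset.sum_congr rfl fun i _ => ?_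
          have hne : (1 + (i:ℝ)) ≠ 0 := by positivity
          push_cast
          field_simp
          ring
  have hharm : (harmonic k : ℝ) ≤ 1 + Real.log k := harmonic_le_one_add_log k
  have h0 : ‖betaCoeff k s₁ s₂ 0‖ ≤ 1 := coeff_le_one k s₁ s₂ 0 hk
  have : ∑ j ∈ Finset.Ico 1 k, ‖betaCoeff k s₁ s₂ j‖ ≤ (harmonic k : ℝ) := by
    refine hA.trans ?_
    rw [Finset.sum_add_distrib, hrefl]
    linarith [hhalf]
  linarith

lemma expansion (k : ℕ) (s₁ s₂ : ℤ) (hk : 0 < k) (s : ℤ) :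
    betaInd k s₁ s₂ s =
      ∑ j ∈ Finset.range k,
        betaCoeff k s₁ s₂ j * Complex.exp (2 * (Real.pi : ℂ) * Complex.I * s * j / k) := by
  have hkC : (k : ℂ) ≠ 0 := Nat.cast_ne_zero.mpr hk.ne'
  have hkZ : (k : ℤ) ≠ 0 := Int.natCast_ne_zero.mpr hk.ne'
  have hmod0 : 0 ≤ s % (k : ℤ) := Int.emod_nonneg s hkZ
  have hmodlt : s % (k : ℤ) < k := Int.emod_lt_of_pos s (by exact_mod_cast hk)
  set t₀ : ℕ := (s % (k : ℤ)).toNat with ht₀def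
  have ht₀ : (t₀ : ℤ) = s % (k : ℤ) := Int.toNat_of_nonneg hmod0
  have ht₀mem : t₀ ∈ Finset.range k := by
    rw [Finset.mem_range]
    omega
  symm
  calc ∑ j ∈ Finset.range k,
        betaCoeff k s₁ s₂ j * Complex.exp (2 * (Real.pi : ℂ) * Complex.I * s * j / k)
      = ∑ j ∈ Finset.range k, ∑ t ∈ Finset.range k,
          (1 / (k : ℂ)) * betaInd k s₁ s₂ t *
            Complex.exp (2 * (Real.pi : ℂ) * Complex.I * ((s - t : ℤ) : ℂ) * j / k) := by
        refine Finset.sum_congr rfl fun j _ => ?_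
        rw [betaCoeff, Finset.mul_sum, Finset.sum_mul]
        refine Finset.sum_congr rfl fun t _ => ?_
        have hexp : Complex.exp (-(2 * (Real.pi : ℂ) * Complex.I * t * j) / k) *
            Complex.exp (2 * (Real.pi : ℂ) * Complex.I * s * j / k) =
            Complex.exp (2 * (Real.pi : ℂ) * Complex.I * ((s - t : ℤ) : ℂ) * j / k) := by
          rw [← Complex.exp_add]
          congr 1
          push_cast
          field_simp
          ring
        calc (1 / (k : ℂ) * (betaInd k s₁ s₂ t *
                Complex.exp (-(2 * (Real.pi : ℂ) * Complex.I * t * j) / k))) *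
              Complex.exp (2 * (Real.pi : ℂ) * Complex.I * s * j / k)
            = 1 / (k : ℂ) * betaInd k s₁ s₂ t *
              (Complex.exp (-(2 * (Real.pi : ℂ) * Complex.I * t * j) / k) *
               Complex.exp (2 * (Real.pi : ℂ) * Complex.I * s * j / k)) := by ring
          _ = _ := by rw [hexp]
    _ = ∑ t ∈ Finset.range k, ∑ j ∈ Finset.range k,
          (1 / (k : ℂ)) * betaInd k s₁ s₂ t *
            Complex.exp (2 * (Real.pi : ℂ) * Complex.I * ((s - t : ℤ) : ℂ) * j / k) :=
        Finset.sum_comm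
    _ = ∑ t ∈ Finset.range k,
          (1 / (k : ℂ)) * betaInd k s₁ s₂ t *
            (if (k : ℤ) ∣ (s - t) then (k : ℂ) else 0) := by
        refine Finset.sum_congr rfl fun t _ => ?_
        rw [← Finset.mul_sum, ortho k hk (s - t)]
    _ = betaInd k s₁ s₂ s := by
        rw [Finset.sum_eq_single t₀]
        · have hdvd : (k : ℤ) ∣ (s - t₀) := by
            refine ⟨s / k, ?_⟩
            have := Int.emod_add_mul_ediv s (k : ℤ)
            omega
          rw [if_pos hdvd]
          have hbeta : betaInd k s₁ s₂ (t₀ : ℤ) = betaInd k s₁ s₂ s := by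
            unfold betaInd
            rw [ht₀, Int.emod_emod_of_dvd _ dvd_rfl]
          rw [hbeta]
          field_simp
        · intro t htmem htne
          have htlt : t < k := Finset.mem_range.mp htmem
          have hnd : ¬ (k : ℤ) ∣ (s - t) := by
            intro hd
            apply htne
            obtain ⟨c, hc⟩ := hd
            have htt : (t : ℤ) % k = t := Int.emod_eq_of_lt (by positivity) (by exact_mod_cast htlt)
            have : (t : ℤ) = s % k := by
              have : s % (k:ℤ) = (t : ℤ) % k := by
                have : s = (t : ℤ) + k * c := by linarith
                rw [this]
                simp [Int.add_mul_emod_self_left]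
              omega
            omega
          rw [if_neg hnd, mul_zero]
        · intro h
          exact absurd ht₀mem h

/-- `β` has a finite Fourier expansion with coefficients `β_j`, and
`∑_j |β_j| = O(k^ε)` for every `ε > 0`. -/
theorem beta_fourier_expansion_and_bound :
    ∀ ε : ℝ, 0 < ε → ∃ C : ℝ, ∀ (k : ℕ) (s₁ s₂ : ℤ), 0 < k →
      0 ≤ s₁ → s₁ < s₂ → s₂ ≤ (k : ℤ) →
      ((∀ s : ℤ, betaInd k s₁ s₂ s =
          ∑ j ∈ Finset.range k,
            betaCoeff k s₁ s₂ j * Complex.exp (2 * (Real.pi : ℂ) * Complex.I * s * j / k)) ∧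
        ∑ j ∈ Finset.range k, ‖betaCoeff k s₁ s₂ j‖ ≤ C * (k : ℝ) ^ ε) := by
  intro ε hε
  refine ⟨2 + 1 / ε, fun k s₁ s₂ hk h1 h12 h2 => ⟨fun s => expansion k s₁ s₂ hk s, ?_⟩⟩
  have hk1 : (1:ℝ) ≤ (k:ℝ) := by exact_mod_cast hk
  have hx : (1:ℝ) ≤ (k:ℝ) ^ ε := Real.one_le_rpow hk1 hε.le
  calc ∑ j ∈ Finset.range k, ‖betaCoeff k s₁ s₂ j‖
      ≤ 2 + Real.log k := sum_bound k s₁ s₂ hk h1 h12 h2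
    _ ≤ 2 + (k:ℝ) ^ ε / ε := by
        have := Real.log_le_rpow_div (Nat.cast_nonneg k) hε
        linarith
    _ ≤ (2 + 1 / ε) * (k:ℝ) ^ ε := by
        have h0 : 0 < ε := hε
        have hxe : (k:ℝ) ^ ε / ε = 1 / ε * (k:ℝ) ^ ε := by ring
        nlinarith [hx, h0]
end

section
/- Let {t(n)}, {A(n)}, {δ(n)} be sequences of positive reals with δ(n) → 0, and suppose for fixed d ≥ 1 there exist reals g_3(n), ..., g_d(n) with g_i(n) = o(δ(n)^i) such that log(t(n+j)/t(n)) = A(n)j − δ(n)²j² + ∑_{i=3}^d g_i(n)j^i + o(δ(n)^d) as n → ∞, uniformly for 0 ≤ j ≤ d. Then the renormalized Jensen polynomials satisfy lim_{n→∞} (δ(n)^{−d}/t(n)) · J_t^{d,n}((δ(n)X − 1)/e^{A(n)}) = H_d(X), the d-th Hermite polynomial, with convergence of coefficients. -/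
open Finset Polynomial Filter Asymptotics

noncomputable def gorzHermite : ℕ → Polynomial ℝ
  | 0 => 1
  | 1 => Polynomial.X
  | (n + 2) => Polynomial.X * gorzHermite (n + 1) - Polynomial.C (2 * (n + 1) : ℝ) * gorzHermite n

noncomputable def jensenPoly (t : ℕ → ℝ) (d n : ℕ) : Polynomial ℝ :=
  ∑ i ∈ Finset.range (d + 1), Polynomial.C ((d.choose i : ℝ) * t (n + i)) * Polynomial.X ^ i

lemma altdiff : ∀ (N : ℕ) (m : ℕ), m ≤ N → ∀ (x : ℝ),
    ∑ l ∈ range (N+1), (-1:ℝ)^l * (N.choose l) * (x + l)^m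
      = if m = N then (-1:ℝ)^N * N.factorial else 0 := by
  intro N
  induction N with
  | zero =>
    intro m hm x
    interval_cases m
    simp
  | succ N IH =>
    intro m hm x
    set g : ℕ → ℝ := fun l => (-1:ℝ)^l * (N.choose l) * (x + l)^m with hgdef
    set S1 : ℝ := ∑ l ∈ range (N+1), g l with hS1
    set S2 : ℝ := ∑ l ∈ range (N+1), (-1:ℝ)^l * (N.choose l) * ((x+1) + l)^m with hS2
    have key : ∑ l ∈ range (N+1+1), (-1:ℝ)^l * ((N+1).choose l) * (x + l)^m = S1 - S2 := by
      rw [Finset.sum_range_succ' (fun l => (-1:ℝ)^l * ((N+1).choose l) * (x + l)^m)]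
      have hsum : ∑ l ∈ range (N+1), (-1:ℝ)^(l+1) * (((N+1)).choose (l+1)) * (x + ↑(l+1))^m
          = ∑ l ∈ range (N+1), (-((-1:ℝ)^l * (N.choose l) * ((x+1) + l)^m) + g (l+1)) := by
        apply Finset.sum_congr rfl
        intro l _
        have h1 : (((N+1)).choose (l+1) : ℝ) = (N.choose l : ℝ) + (N.choose (l+1) : ℝ) := by
          rw [Nat.choose_succ_succ]; push_cast; ring
        have h2 : ((x:ℝ) + ↑(l+1)) = (x+1) + l := by push_cast; ring
        rw [h1, h2, hgdef]
        push_cast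
        ring
      have hshift : ∑ l ∈ range (N+1), g (l+1) = S1 - g 0 := by
        have h3 : ∑ l ∈ range (N+1+1), g l = (∑ l ∈ range (N+1), g (l+1)) + g 0 :=
          Finset.sum_range_succ' g (N+1)
        have h4 : ∑ l ∈ range (N+1+1), g l = S1 + g (N+1) := Finset.sum_range_succ g (N+1)
        have h5 : g (N+1) = 0 := by
          simp [hgdef, Nat.choose_succ_self]
        rw [h5, add_zero] at h4
        rw [h4] at h3
        linarith
      rw [hsum, Finset.sum_add_distrib, Finset.sum_neg_distrib, hshift]
      have h6 : (-1:ℝ)^0 * (((N+1)).choose 0 : ℝ) * (x + (0:ℕ))^m = g 0 := by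
        simp [hgdef]
      rw [h6]
      rw [← hS2]
      ring
    -- binomial expansion of S2
    have hbin : S2 = ∑ m' ∈ range (m+1), (m.choose m' : ℝ) *
        ∑ l ∈ range (N+1), (-1:ℝ)^l * (N.choose l) * (x + l)^m' := by
      rw [hS2]
      have : ∀ l ∈ range (N+1), (-1:ℝ)^l * (N.choose l) * ((x+1) + l)^m
          = ∑ m' ∈ range (m+1), (m.choose m' : ℝ) * ((-1:ℝ)^l * (N.choose l) * (x + l)^m') := by
        intro l _
        have : ((x+1) + (l:ℝ)) = (x + l) + 1 := by ring
        rw [this, add_pow]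
        rw [Finset.mul_sum]
        apply Finset.sum_congr rfl
        intro m' _
        ring
      rw [Finset.sum_congr rfl this, Finset.sum_comm]
      exact Finset.sum_congr rfl fun m' _ => (Finset.mul_sum _ _ _).symm
    have hIH : ∀ m' ∈ range m, (∑ l ∈ range (N+1), (-1:ℝ)^l * (N.choose l) * (x + l)^m')
        = if m' = N then (-1:ℝ)^N * N.factorial else 0 := by
      intro m' hm'
      have := Finset.mem_range.mp hm'
      exact IH m' (by omega) x
    have hbin2 : S2 = (∑ m' ∈ range m, (m.choose m' : ℝ) *
        (if m' = N then (-1:ℝ)^N * N.factorial else 0)) + S1 := by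
      rw [hbin, Finset.sum_range_succ]
      simp only [Nat.choose_self, Nat.cast_one, one_mul]
      congr 1
      apply Finset.sum_congr rfl
      intro m' hm'
      rw [hIH m' hm']
    have hite : (∑ m' ∈ range m, (m.choose m' : ℝ) *
        (if m' = N then (-1:ℝ)^N * N.factorial else 0))
        = if N ∈ range m then (m.choose N : ℝ) * ((-1:ℝ)^N * N.factorial) else 0 := by
      rw [← Finset.sum_ite_eq' (range m) N (fun m' => (m.choose m' : ℝ) * ((-1:ℝ)^N * N.factorial))]
      apply Finset.sum_congr rfl
      intro m' _
      by_cases h : m' = N <;> simp [h]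
    rw [key, hbin2, hite]
    by_cases hmN : m = N + 1
    · subst hmN
      have : N ∈ range (N+1) := by simp
      rw [if_pos this, if_pos rfl]
      rw [Nat.choose_succ_self_right]
      rw [Nat.factorial_succ]
      push_cast
      ring
    · have h7 : N ∉ range m := by
        simp only [Finset.mem_range]
        omega
      rw [if_neg h7, if_neg hmN]
      ring

lemma delta_sum (d i m : ℕ) (hi : i ≤ d) (hm : m ≤ d - i) :
    ∑ j ∈ range (d+1), (d.choose j : ℝ) * (j.choose i) * (-1:ℝ)^(j-i) * (j:ℝ)^m
      = if m = d - i then (d.choose i : ℝ) * ((-1:ℝ)^(d-i) * (d-i).factorial) else 0 := by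
  have hsplit : d + 1 = i + (d + 1 - i) := by omega
  rw [hsplit, Finset.sum_range_add]
  have h1 : ∑ j ∈ range i, (d.choose j : ℝ) * (j.choose i) * (-1:ℝ)^(j-i) * (j:ℝ)^m = 0 := by
    apply Finset.sum_eq_zero
    intro j hj
    have : j.choose i = 0 := Nat.choose_eq_zero_of_lt (Finset.mem_range.mp hj)
    simp [this]
  rw [h1, zero_add]
  have h2 : ∀ l ∈ range (d + 1 - i), (d.choose (i+l) : ℝ) * ((i+l).choose i) * (-1:ℝ)^((i+l)-i) * ((i+l:ℕ):ℝ)^m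
      = (d.choose i : ℝ) * ((-1:ℝ)^l * ((d-i).choose l) * ((i:ℝ) + l)^m) := by
    intro l hl
    have hl' : l ≤ d - i := by have := Finset.mem_range.mp hl; omega
    have hc : d.choose (i+l) * (i+l).choose i = d.choose i * (d-i).choose ((i+l)-i) :=
      Nat.choose_mul (by omega)
    have hc2 : (i+l)-i = l := by omega
    rw [hc2] at hc
    have hcast : ((i+l:ℕ):ℝ) = (i:ℝ) + l := by push_cast; ring
    rw [hcast, hc2]
    have : (d.choose (i+l) : ℝ) * ((i+l).choose i) = (d.choose i : ℝ) * ((d-i).choose l) := by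
      exact_mod_cast congrArg (Nat.cast : ℕ → ℝ) hc
    push_cast at this ⊢
    rw [mul_assoc, mul_assoc, ← mul_assoc ((d.choose (i+l)):ℝ), this]
    ring
  rw [Finset.sum_congr rfl h2, ← Finset.mul_sum]
  have h3 : d + 1 - i = (d - i) + 1 := by omega
  rw [h3, altdiff (d-i) m hm (i:ℝ)]
  by_cases h : m = d - i <;> simp [h]

noncomputable def hcoef (d i : ℕ) : ℝ :=
  if i ≤ d ∧ 2 ∣ (d - i) then
    (-1:ℝ)^((d-i)/2) * (d.choose i) * (d-i).factorial / ((d-i)/2).factorial else 0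

lemma hcoef_eq (d i k : ℕ) (h : d = i + 2*k) :
    hcoef d i = (-1:ℝ)^k * (d.choose i) * (2*k).factorial / k.factorial := by
  have h1 : d - i = 2*k := by omega
  have h2 : (d-i)/2 = k := by omega
  have h3 : 2*k/2 = k := by omega
  rw [hcoef, if_pos ⟨by omega, by omega⟩, h1, h3]

lemma hcoef_eq_zero (d i : ℕ) (h : ∀ k, d ≠ i + 2*k) : hcoef d i = 0 := by
  rw [hcoef, if_neg]
  rintro ⟨h1, k, h2⟩
  exact h k (by omega)

lemma gorzHermite_coeff : ∀ d i : ℕ, (gorzHermite d).coeff i = hcoef d i := by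
  intro d
  induction d using Nat.strong_induction_on with
  | _ d IH =>
    match d with
    | 0 =>
      intro i
      show (1 : Polynomial ℝ).coeff i = _
      rcases Nat.eq_zero_or_pos i with rfl | hi
      · rw [hcoef_eq 0 0 0 (by omega)]; simp
      · rw [hcoef_eq_zero 0 i (by omega)]
        rw [Polynomial.coeff_one, if_neg (by omega)]
    | 1 =>
      intro i
      show (X : Polynomial ℝ).coeff i = _
      rcases eq_or_ne i 1 with rfl | hi
      · rw [hcoef_eq 1 1 0 (by omega)]; simp
      · rw [hcoef_eq_zero 1 i (by omega), Polynomial.coeff_X, if_neg (by omega)]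
    | (n+2) =>
      intro i
      have hrec : gorzHermite (n+2) = X * gorzHermite (n+1) - C (2 * (n+1) : ℝ) * gorzHermite n := by
        rfl
      rw [hrec, Polynomial.coeff_sub, Polynomial.coeff_C_mul]
      rcases Nat.eq_zero_or_pos i with rfl | hip
      · rw [Polynomial.mul_coeff_zero, Polynomial.coeff_X_zero, zero_mul, zero_sub]
        rw [IH n (by omega) 0]
        by_cases hpar : 2 ∣ n
        · obtain ⟨k, hk⟩ := hpar
          rw [hcoef_eq n 0 k (by omega), hcoef_eq (n+2) 0 (k+1) (by omega)]
          have hfac : ((2*(k+1)).factorial : ℝ) = (2*k+2) * ((2*k+1) * (2*k).factorial) := by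
            have : 2*(k+1) = (2*k+1) + 1 := by ring
            rw [this, Nat.factorial_succ, Nat.factorial_succ]; push_cast; ring
          have hfac2 : ((k+1).factorial : ℝ) = (k+1) * k.factorial := by
            rw [Nat.factorial_succ]; push_cast; ring
          rw [hfac, hfac2]
          simp only [Nat.choose_zero_right, Nat.cast_one]
          have hk1 : (k.factorial : ℝ) ≠ 0 := by positivity
          have hk2 : ((k:ℝ)+1) ≠ 0 := by positivity
          field_simp
          push_cast
          have : (n:ℝ) = 2*k := by exact_mod_cast congrArg (Nat.cast : ℕ → ℝ) hk
          rw [this]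
          ring
        · rw [hcoef_eq_zero n 0 (by omega), hcoef_eq_zero (n+2) 0 (by omega)]
          ring
      · obtain ⟨i', rfl⟩ := Nat.exists_eq_add_of_le hip
        rw [add_comm 1 i'] at *
        rw [Polynomial.coeff_X_mul, IH (n+1) (by omega) i', IH n (by omega) (i'+1)]
        by_cases hcond : i'+1 ≤ n+2 ∧ 2 ∣ (n+1-i')
        · rcases eq_or_ne i' (n+1) with rfl | hne
          · rw [hcoef_eq (n+1) (n+1) 0 (by omega), hcoef_eq (n+2) (n+1+1) 0 (by omega),
              hcoef_eq_zero n (n+1+1) (by omega)]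
            simp
          · have hle : i' ≤ n := by omega
            have : ∃ k, n+1-i' = 2*(k+1) := by
              obtain ⟨k, hk⟩ := hcond.2
              have : k ≥ 1 := by omega
              exact ⟨k-1, by omega⟩
            obtain ⟨k, hk⟩ := this
            rw [hcoef_eq (n+2) (i'+1) (k+1) (by omega), hcoef_eq (n+1) i' (k+1) (by omega),
              hcoef_eq n (i'+1) k (by omega)]
            have hpascal : ((n+2).choose (i'+1) : ℝ) = ((n+1).choose i' : ℝ) + ((n+1).choose (i'+1) : ℝ) := by
              rw [Nat.choose_succ_succ (n+1) i']; push_cast; ring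
            have hkey : ((n.choose (i'+1)):ℝ) * ((n:ℝ)+1) = ((n+1).choose (i'+1) : ℝ) * (2*(k:ℝ)+1) := by
              have h0 := Nat.choose_mul_succ_eq n (i'+1)
              have h2 : n + 1 - (i'+1) = 2*k+1 := by omega
              rw [h2] at h0
              exact_mod_cast congrArg (Nat.cast : ℕ → ℝ) h0
            have hfac : ((2*(k+1)).factorial : ℝ) = (2*(k:ℝ)+2) * ((2*(k:ℝ)+1) * ((2*k).factorial:ℝ)) := by
              have h5 : 2*(k+1) = (2*k+1) + 1 := by ring
              rw [h5, Nat.factorial_succ, Nat.factorial_succ]; push_cast; ring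
            have hfac2 : ((k+1).factorial : ℝ) = ((k:ℝ)+1) * (k.factorial:ℝ) := by
              rw [Nat.factorial_succ]; push_cast; ring
            have step : ((-1:ℝ)^(k+1) * (((n+1).choose (i'+1)):ℝ) * (((2*(k+1)).factorial):ℝ)) / (((k+1).factorial):ℝ)
                = (-(2*((n:ℝ)+1)) * ((-1:ℝ)^k * ((n.choose (i'+1)):ℝ) * (((2*k).factorial):ℝ))) / ((k.factorial:ℝ)) := by
              rw [div_eq_div_iff (by positivity) (by positivity), hfac, hfac2]
              linear_combination ((2*(k:ℝ)+2) * (((2*k).factorial:ℝ)) * ((k.factorial:ℝ)) * (-1:ℝ)^k) * hkey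
            rw [hpascal]
            linear_combination -step
        · have h1 : hcoef (n+2) (i'+1) = 0 := hcoef_eq_zero _ _ (by omega)
          have h2 : hcoef (n+1) i' = 0 := hcoef_eq_zero _ _ (by omega)
          have h3 : hcoef n (i'+1) = 0 := hcoef_eq_zero _ _ (by omega)
          rw [h1, h2, h3]
          ring

lemma pow_coeff_aux (v : ℝ) (j i : ℕ) :
    ((C v * X - 1 : ℝ[X])^j).coeff i = (j.choose i : ℝ) * v^i * (-1:ℝ)^(j-i) := by
  have h : (C v * X - 1 : ℝ[X]) = C v * X + C (-1) := by
    rw [map_neg, map_one]; ring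
  rw [h, add_pow, Polynomial.finset_sum_coeff]
  have h2 : ∀ k ∈ range (j+1), ((C v * X)^k * C (-1:ℝ)^(j-k) * ((j.choose k : ℕ) : ℝ[X])).coeff i
      = if k = i then (j.choose i : ℝ) * v^i * (-1:ℝ)^(j-i) else 0 := by
    intro k _
    have e1 : ((C v * X)^k * C (-1:ℝ)^(j-k) * ((j.choose k : ℕ) : ℝ[X]))
        = C (v^k * (-1:ℝ)^(j-k) * (j.choose k : ℝ)) * X^k := by
      simp only [mul_pow, ← C_pow, ← Polynomial.C_eq_natCast, C_mul]
      ring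
    rw [e1, Polynomial.coeff_C_mul, Polynomial.coeff_X_pow]
    by_cases hk : k = i
    · subst hk; simp; ring
    · simp [hk, Ne.symm hk]
  rw [Finset.sum_congr rfl h2, Finset.sum_ite_eq' (range (j+1)) i]
  by_cases hij : i ∈ range (j+1)
  · rw [if_pos hij]
  · rw [if_neg hij]
    have : j.choose i = 0 := Nat.choose_eq_zero_of_lt (by simpa using hij)
    simp [this]

lemma jensen_coeff (t : ℕ → ℝ) (d n i : ℕ) (c u v : ℝ) :
    (C c * ((jensenPoly t d n).comp (C u * (C v * X - 1)))).coeff i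
      = ∑ j ∈ range (d+1), (d.choose j : ℝ) * (j.choose i : ℝ) * (-1:ℝ)^(j-i)
          * (c * t (n+j) * u^j * v^i) := by
  rw [Polynomial.coeff_C_mul, jensenPoly]
  have h1 : ((∑ j ∈ range (d+1), C ((d.choose j : ℝ) * t (n + j)) * X ^ j).comp
      (C u * (C v * X - 1)))
      = ∑ j ∈ range (d+1), C ((d.choose j : ℝ) * t (n + j)) * (C (u^j) * (C v * X - 1)^j) := by
    rw [Polynomial.comp, Polynomial.eval₂_finset_sum]
    apply Finset.sum_congr rfl
    intro j _
    rw [Polynomial.eval₂_mul, Polynomial.eval₂_C, Polynomial.eval₂_X_pow, mul_pow, ← C_pow]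
  rw [h1, Polynomial.finset_sum_coeff, Finset.mul_sum]
  apply Finset.sum_congr rfl
  intro j _
  rw [← mul_assoc, ← C_mul, Polynomial.coeff_C_mul, pow_coeff_aux]
  ring

section
variable (δ : ℕ → ℝ) (g : ℕ → ℕ → ℝ) (d : ℕ)

noncomputable def pAux (n : ℕ) : ℝ[X] :=
  C (-(δ n^2)) * X^2 + ∑ u ∈ Finset.Icc 3 d, C (g u n) * X^u

lemma pAux_coeff (n u : ℕ) : (pAux δ g d n).coeff u
    = (if u = 2 then -(δ n^2) else 0) + (if u ∈ Finset.Icc 3 d then g u n else 0) := by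
  rw [pAux, Polynomial.coeff_add, Polynomial.coeff_C_mul, Polynomial.coeff_X_pow,
    Polynomial.finset_sum_coeff]
  congr 1
  · by_cases h : u = 2 <;> simp [h]
  · have h5 : ∀ m ∈ Finset.Icc 3 d, (C (g m n) * X^m).coeff u = if u = m then g m n else 0 := by
      intro m _
      rw [Polynomial.coeff_C_mul, Polynomial.coeff_X_pow]
      by_cases h : u = m <;> simp [h]
    rw [Finset.sum_congr rfl h5, Finset.sum_ite_eq (Finset.Icc 3 d) u (fun m => g m n)]

lemma pAux_natDegree (hd : 1 ≤ d) (n : ℕ) : (pAux δ g d n).natDegree ≤ 2*d := by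
  apply Polynomial.natDegree_add_le_of_degree_le
  · exact (Polynomial.natDegree_C_mul_X_pow_le _ 2).trans (by omega)
  · apply Polynomial.natDegree_sum_le_of_forall_le
    intro u hu
    exact (Polynomial.natDegree_C_mul_X_pow_le _ u).trans (by
      have := (Finset.mem_Icc.mp hu).2; omega)

variable {δ g d}

lemma pAux_coeff_littleO (hδ : ∀ n, 0 < δ n) (hδ0 : Tendsto δ atTop (nhds 0))
    (hg : ∀ i, 3 ≤ i → i ≤ d → (fun n => g i n) =o[atTop] fun n => δ n ^ i) :
    ∀ k m : ℕ, (fun n => ((pAux δ g d n)^k).coeff m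
      - (if m = 2*k then (-(δ n^2))^k else 0)) =o[atTop] fun n => δ n ^ m := by
  -- preliminary: coeff of pAux is O(δ^u)
  have hδ1 : ∀ᶠ n in atTop, δ n ≤ 1 := hδ0.eventually_le_const (by norm_num)
  have hOsingle : ∀ u : ℕ, (fun n => (pAux δ g d n).coeff u) =O[atTop] fun n => δ n ^ u := by
    intro u
    have h1 : (fun n => (if u = 2 then -(δ n^2) else 0)) =O[atTop] fun n => δ n ^ u := by
      by_cases h : u = 2
      · subst h; simp only [if_pos rfl]; exact (isBigO_refl _ _).neg_left
      · simp only [if_neg h]; exact isBigO_zero _ _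
    have h2 : (fun n => (if u ∈ Finset.Icc 3 d then g u n else 0)) =O[atTop] fun n => δ n ^ u := by
      by_cases h : u ∈ Finset.Icc 3 d
      · simp only [if_pos h]
        exact (hg u (Finset.mem_Icc.mp h).1 (Finset.mem_Icc.mp h).2).isBigO
      · simp only [if_neg h]; exact isBigO_zero _ _
    have := h1.add h2
    apply IsBigO.congr' this (by filter_upwards with n using (pAux_coeff δ g d n u).symm)
      (by filter_upwards with n using rfl)
  intro k
  induction k with
  | zero =>
    intro m
    have : ∀ n : ℕ, ((pAux δ g d n)^0).coeff m - (if m = 2*0 then (-(δ n^2))^0 else 0) = 0 := by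
      intro n
      rcases eq_or_ne m 0 with rfl | hm
      · simp
      · simp [Polynomial.coeff_one, hm]
    simp only [this]
    exact isLittleO_zero _ _
  | succ k IH =>
    -- big O for p^k
    have hOk : ∀ v : ℕ, (fun n => ((pAux δ g d n)^k).coeff v) =O[atTop] fun n => δ n ^ v := by
      intro v
      have h1 : (fun n => (if v = 2*k then (-(δ n^2))^k else 0)) =O[atTop] fun n => δ n ^ v := by
        by_cases h : v = 2*k
        · subst h
          have : ∀ n, (-(δ n^2))^k = (-1)^k * δ n ^ (2*k) := by
            intro n; rw [neg_pow, pow_mul]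
          simp only [if_pos rfl, this]
          exact (isBigO_refl (fun n => δ n ^ (2*k)) atTop).const_mul_left _
        · simp only [if_neg h]; exact isBigO_zero _ _
      have := (IH v).isBigO.add h1
      apply this.congr' (by filter_upwards with n using by ring) (by filter_upwards with n using rfl)
    intro m
    have hexpand : ∀ n : ℕ, ((pAux δ g d n)^(k+1)).coeff m
        - (if m = 2*(k+1) then (-(δ n^2))^(k+1) else 0)
        = ∑ uv ∈ Finset.HasAntidiagonal.antidiagonal m,
            ((pAux δ g d n).coeff uv.1 * ((pAux δ g d n)^k).coeff uv.2
              - (if uv = (2, 2*k) then (-(δ n^2))^(k+1) else 0)) := by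
      intro n
      rw [Finset.sum_sub_distrib]
      congr 1
      · rw [pow_succ']
        exact Polynomial.coeff_mul _ _ _
      · rw [Finset.sum_ite_eq' (Finset.HasAntidiagonal.antidiagonal m) ((2, 2*k))]
        by_cases h : m = 2*(k+1)
        · rw [if_pos h, if_pos (by rw [Finset.HasAntidiagonal.mem_antidiagonal]; omega)]
        · rw [if_neg h, if_neg (by rw [Finset.HasAntidiagonal.mem_antidiagonal]; omega)]
    simp only [hexpand]
    apply IsLittleO.fun_sum
    rintro ⟨u, v⟩ huv
    have hm : u + v = m := Finset.HasAntidiagonal.mem_antidiagonal.mp huv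
    have hpow : (fun n => δ n ^ m) = fun n => δ n ^ u * δ n ^ v := by
      funext n; rw [← pow_add, hm]
    rw [hpow]
    have hc2 : ∀ n, (pAux δ g d n).coeff 2 = -(δ n^2) := by
      intro n; rw [pAux_coeff, if_pos rfl, if_neg (by simp), add_zero]
    by_cases hu : u = 2
    · by_cases hv : v = 2*k
      · subst hu; subst hv
        have hO2 : (fun n => -(δ n^2)) =O[atTop] fun n => δ n ^ 2 :=
          (isBigO_refl _ _).neg_left
        refine IsLittleO.congr' (hO2.mul_isLittleO (IH (2*k))) ?_ EventuallyEq.rfl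
        filter_upwards with n
        rw [if_pos rfl, if_pos rfl, hc2 n]
        ring
      · subst hu
        have hlit : (fun n => ((pAux δ g d n)^k).coeff v) =o[atTop] fun n => δ n ^ v := by
          refine IsLittleO.congr' (IH v) ?_ EventuallyEq.rfl
          filter_upwards with n
          rw [if_neg hv, sub_zero]
        have hO2 : (fun n => -(δ n^2)) =O[atTop] fun n => δ n ^ 2 :=
          (isBigO_refl _ _).neg_left
        refine IsLittleO.congr' (hO2.mul_isLittleO hlit) ?_ EventuallyEq.rfl
        filter_upwards with n
        rw [if_neg (by simp [hv]), sub_zero, hc2 n]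
    · have hlit : (fun n => (pAux δ g d n).coeff u) =o[atTop] fun n => δ n ^ u := by
        have h6 : ∀ n, (pAux δ g d n).coeff u = (if u ∈ Finset.Icc 3 d then g u n else 0) := by
          intro n; rw [pAux_coeff, if_neg hu, zero_add]
        simp only [h6]
        by_cases h : u ∈ Finset.Icc 3 d
        · simp only [if_pos h]
          exact hg u (Finset.mem_Icc.mp h).1 (Finset.mem_Icc.mp h).2
        · simp only [if_neg h]; exact isLittleO_zero _ _
      refine IsLittleO.congr' (hlit.mul_isBigO (hOk v)) ?_ EventuallyEq.rfl
      filter_upwards with n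
      rw [if_neg (by simp [hu]), sub_zero]
end

lemma tendsto_aux2 (δ : ℕ → ℝ) (hδ : ∀ n, 0 < δ n) (hδ0 : Tendsto δ atTop (nhds 0))
    (i m d : ℕ) (him : d ≤ i + m) (r : ℕ → ℝ) (hr : r =o[atTop] fun n => δ n ^ m) :
    Tendsto (fun n => δ n^i * (δ n^d)⁻¹ * r n) atTop (nhds 0) := by
  have h1 : Tendsto (fun n => r n / δ n ^ m) atTop (nhds 0) := hr.tendsto_div_nhds_zero
  have h2 : Tendsto (fun n => δ n ^ (i+m-d)) atTop (nhds ((0:ℝ)^(i+m-d))) := hδ0.pow _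
  have h3 := h2.mul h1
  rw [mul_zero] at h3
  apply h3.congr
  intro n
  have hne : δ n ≠ 0 := (hδ n).ne'
  rw [pow_sub₀ (δ n) hne him, pow_add]
  field_simp

/-- Theorem of Griffin–Ono–Rolen–Zagier: under the stated asymptotic expansion
of `log(t(n+j)/t(n))`, the renormalized Jensen polynomials
`(δ(n)^{−d}/t(n)) J_t^{d,n}((δ(n)X − 1)/e^{A(n)})` converge coefficientwise to
the Hermite polynomial `H_d`. -/
theorem gorz_jensen_to_hermite (t A δ : ℕ → ℝ) (d : ℕ) (hd : 1 ≤ d)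
    (ht : ∀ n, 0 < t n) (hA : ∀ n, 0 < A n) (hδ : ∀ n, 0 < δ n)
    (hδ0 : Filter.Tendsto δ Filter.atTop (nhds 0))
    (g : ℕ → ℕ → ℝ)
    (hg : ∀ i, 3 ≤ i → i ≤ d → (fun n => g i n) =o[Filter.atTop] fun n => δ n ^ i)
    (hexp : ∀ j : ℕ, j ≤ d →
      (fun n => Real.log (t (n + j) / t n) -
          (A n * j - δ n ^ 2 * (j : ℝ) ^ 2 + ∑ i ∈ Finset.Icc 3 d, g i n * (j : ℝ) ^ i))
        =o[Filter.atTop] fun n => δ n ^ d) :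
    ∀ i : ℕ, Filter.Tendsto (fun n =>
        (Polynomial.C (((δ n) ^ d)⁻¹ * (t n)⁻¹) *
          (jensenPoly t d n).comp
            (Polynomial.C ((Real.exp (A n))⁻¹) *
              (Polynomial.C (δ n) * Polynomial.X - 1))).coeff i)
      Filter.atTop (nhds ((gorzHermite d).coeff i)) := by
  intro i
  have hδne : ∀ n, δ n ≠ 0 := fun n => (hδ n).ne'
  set a : ℕ → ℝ := fun j => (d.choose j : ℝ) * (j.choose i : ℝ) * (-1:ℝ)^(j-i) with ha
  set F : ℕ → ℕ → ℝ := fun j n => t (n+j) * (t n)⁻¹ * ((Real.exp (A n))⁻¹)^j with hF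
  have hcoeff : ∀ n, (Polynomial.C (((δ n) ^ d)⁻¹ * (t n)⁻¹) *
          (jensenPoly t d n).comp
            (Polynomial.C ((Real.exp (A n))⁻¹) *
              (Polynomial.C (δ n) * Polynomial.X - 1))).coeff i
      = ∑ j ∈ range (d+1), a j * (δ n^i * ((δ n)^d)⁻¹ * F j n) := by
    intro n
    rw [jensen_coeff]
    apply Finset.sum_congr rfl
    intro j _
    simp only [ha, hF]
    ring
  rw [gorzHermite_coeff d i]
  simp only [hcoeff]
  by_cases hid : d < i
  · have h0 : ∀ n, ∑ j ∈ range (d+1), a j * (δ n^i * ((δ n)^d)⁻¹ * F j n) = 0 := by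
      intro n
      apply Finset.sum_eq_zero
      intro j hj
      have hji : j < i := by have := Finset.mem_range.mp hj; omega
      have h1 : j.choose i = 0 := Nat.choose_eq_zero_of_lt hji
      simp [ha, h1]
    rw [hcoef_eq_zero d i (by omega)]
    simp only [h0]
    exact tendsto_const_nhds
  push_neg at hid
  set ψ : ℕ → ℕ → ℝ := fun j n => (pAux δ g d n).eval (j:ℝ) with hψ
  set ε : ℕ → ℕ → ℝ := fun j n => Real.log (t (n + j) / t n) -
      (A n * j - δ n ^ 2 * (j : ℝ) ^ 2 + ∑ m ∈ Finset.Icc 3 d, g m n * (j : ℝ) ^ m) with hε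
  set T : ℕ → ℕ → ℝ := fun j n => ∑ k ∈ range (d+1), (ψ j n)^k / (k.factorial : ℝ) with hT
  set Dl : ℕ → ℝ := fun m => ∑ j ∈ range (d+1), a j * (j:ℝ)^m with hDl
  set M : ℕ := 2*d*d+1 with hM
  have hδd0 : Tendsto (fun n => δ n ^ d) atTop (nhds 0) := by
    have := hδ0.pow d
    simpa [zero_pow (by omega : d ≠ 0)] using this
  have hψ_eval : ∀ j n, ψ j n = -(δ n^2) * (j:ℝ)^2 + ∑ m ∈ Finset.Icc 3 d, g m n * (j:ℝ)^m := by
    intro j n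
    simp only [hψ, pAux, Polynomial.eval_add, Polynomial.eval_mul, Polynomial.eval_C,
      Polynomial.eval_pow, Polynomial.eval_X, Polynomial.eval_finset_sum]
  have hFexp : ∀ j n, F j n = Real.exp (ψ j n + ε j n) := by
    intro j n
    have h1 : ψ j n + ε j n = Real.log (t (n+j) / t n) + (-(A n * j)) := by
      rw [hψ_eval]
      simp only [hε]
      ring
    rw [h1, Real.exp_add, Real.exp_log (div_pos (ht (n+j)) (ht n)), Real.exp_neg]
    rw [mul_comm (A n) (j:ℝ), Real.exp_nat_mul, ← inv_pow]
    simp only [hF]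
    rw [div_eq_mul_inv]
  have hδ1 : ∀ᶠ n in atTop, δ n ≤ 1 := hδ0.eventually_le_const (by norm_num)
  have hψO : ∀ j : ℕ, (fun n => ψ j n) =O[atTop] fun n => δ n^2 := by
    intro j
    have h1 : (fun n => -(δ n^2) * (j:ℝ)^2) =O[atTop] fun n => δ n^2 := by
      have h := (isBigO_refl (fun n => δ n^2) atTop).const_mul_left (-((j:ℝ)^2))
      apply h.congr' ?_ EventuallyEq.rfl
      filter_upwards with n; ring
    have h2 : ∀ m ∈ Finset.Icc 3 d, (fun n => g m n * (j:ℝ)^m) =O[atTop] fun n => δ n^2 := by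
      intro m hm
      obtain ⟨hm3, hmd⟩ := Finset.mem_Icc.mp hm
      have hgm : (fun n => g m n) =O[atTop] fun n => δ n ^ m := (hg m hm3 hmd).isBigO
      have hmono : (fun n => δ n ^ m) =O[atTop] fun n => δ n ^ 2 := by
        rw [isBigO_iff]
        refine ⟨1, ?_⟩
        filter_upwards [hδ1] with n h1n
        rw [Real.norm_eq_abs, Real.norm_eq_abs, abs_of_pos (pow_pos (hδ n) m),
          abs_of_pos (pow_pos (hδ n) 2), one_mul]
        exact pow_le_pow_of_le_one (hδ n).le h1n (by omega)
      have h := (hgm.trans hmono).const_mul_left ((j:ℝ)^m)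
      apply h.congr' ?_ EventuallyEq.rfl
      filter_upwards with n
      ring
    have h3 := h1.add (IsBigO.sum h2)
    apply h3.congr' ?_ EventuallyEq.rfl
    filter_upwards with n
    simp only [Finset.sum_apply]
    exact (hψ_eval j n).symm
  have hψ0 : ∀ j : ℕ, Tendsto (fun n => ψ j n) atTop (nhds 0) := by
    intro j
    have hδ20 : Tendsto (fun n => δ n^2) atTop (nhds 0) := by
      have := hδ0.pow 2
      simpa using this
    exact (hψO j).trans_tendsto hδ20
  have hεo : ∀ j, j ≤ d → (fun n => ε j n) =o[atTop] fun n => δ n^d := fun j hj => hexp j hj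
  have hε0 : ∀ j, j ≤ d → Tendsto (fun n => ε j n) atTop (nhds 0) :=
    fun j hj => ((hεo j hj).isBigO).trans_tendsto hδd0
  have hFT : ∀ j, j ≤ d → (fun n => F j n - T j n) =o[atTop] fun n => δ n^d := by
    intro j hj
    have part1 : (fun n => Real.exp (ψ j n) * (Real.exp (ε j n) - 1)) =o[atTop]
        fun n => δ n^d := by
      have hb : (fun n => Real.exp (ψ j n)) =O[atTop] (fun _ => (1:ℝ)) := by
        have h : Tendsto (fun n => Real.exp (ψ j n)) atTop (nhds (Real.exp 0)) :=
          (Real.continuous_exp.continuousAt).tendsto.comp (hψ0 j)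
        exact h.isBigO_one ℝ
      have hεsmall : ∀ᶠ n in atTop, |ε j n| ≤ 1 := by
        have h := NormedAddCommGroup.tendsto_nhds_zero.mp (hε0 j hj) 1 one_pos
        filter_upwards [h] with n hn
        rw [Real.norm_eq_abs] at hn; exact hn.le
      have hO : (fun n => Real.exp (ε j n) - 1) =O[atTop] fun n => ε j n := by
        rw [isBigO_iff]
        refine ⟨2, ?_⟩
        filter_upwards [hεsmall] with n hn
        rw [Real.norm_eq_abs, Real.norm_eq_abs]
        exact Real.abs_exp_sub_one_le hn
      have h := hb.mul_isLittleO (hO.trans_isLittleO (hεo j hj))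
      apply h.congr' EventuallyEq.rfl ?_
      filter_upwards with n; simp
    have part2 : (fun n => Real.exp (ψ j n) - T j n) =o[atTop] fun n => δ n^d := by
      have hψsmall : ∀ᶠ n in atTop, |ψ j n| ≤ 1 := by
        have h := NormedAddCommGroup.tendsto_nhds_zero.mp (hψ0 j) 1 one_pos
        filter_upwards [h] with n hn
        rw [Real.norm_eq_abs] at hn; exact hn.le
      have hO : (fun n => Real.exp (ψ j n) - T j n) =O[atTop] fun n => (ψ j n)^(d+1) := by
        rw [isBigO_iff]
        refine ⟨((d+1:ℝ)+1)/((d+1).factorial * (d+1)), ?_⟩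
        filter_upwards [hψsmall] with n hn
        have hb := Real.exp_bound hn (by omega : 0 < d+1)
        rw [Real.norm_eq_abs, Real.norm_eq_abs, abs_pow]
        have hTn : T j n = ∑ k ∈ range (d+1), (ψ j n)^k / (k.factorial : ℝ) := rfl
        rw [hTn]
        refine le_trans hb (le_of_eq ?_)
        push_cast
        ring
      have h2 : (fun n => (ψ j n)^(d+1)) =O[atTop] fun n => (δ n^2)^(d+1) := (hψO j).pow (d+1)
      have h3 : (fun n => (δ n^2)^(d+1)) =o[atTop] fun n => δ n^d := by
        rw [isLittleO_iff_tendsto (fun n h => absurd h (pow_ne_zero d (hδne n)))]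
        have heq : ∀ n : ℕ, (δ n^2)^(d+1) / δ n^d = δ n^(d+2) := by
          intro n
          have h9 : δ n ^ d ≠ 0 := pow_ne_zero d (hδne n)
          rw [← pow_mul, show 2*(d+1) = (d+2)+d by ring, pow_add]
          field_simp
        have h := hδ0.pow (d+2)
        rw [zero_pow (by omega : d+2 ≠ 0)] at h
        exact h.congr (fun n => (heq n).symm)
      exact (hO.trans h2).trans_isLittleO h3
    have h := part1.add part2
    apply h.congr' ?_ EventuallyEq.rfl
    filter_upwards with n
    rw [hFexp j n, Real.exp_add]
    ring
  have hrem : Tendsto (fun n => ∑ j ∈ range (d+1),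
      a j * (δ n^i * (δ n^d)⁻¹ * (F j n - T j n))) atTop (nhds 0) := by
    have h : ∀ j ∈ range (d+1), Tendsto
        (fun n => a j * (δ n^i * (δ n^d)⁻¹ * (F j n - T j n))) atTop (nhds 0) := by
      intro j hj
      have hj' : j ≤ d := by have := Finset.mem_range.mp hj; omega
      have h := (tendsto_aux2 δ hδ hδ0 i d d (by omega) _ (hFT j hj')).const_mul (a j)
      rw [mul_zero] at h
      apply h.congr
      intro n; ring
    have h2 := tendsto_finset_sum (range (d+1)) h
    simpa using h2
  have hdeg : ∀ n k, k ≤ d → ((pAux δ g d n)^k).natDegree < M := by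
    intro n k hk
    have h1 : ((pAux δ g d n)^k).natDegree ≤ k * (2*d) :=
      natDegree_pow_le_of_le k (pAux_natDegree δ g d hd n)
    have h2 : k * (2*d) ≤ d * (2*d) := Nat.mul_le_mul_right _ hk
    have h3 : d * (2*d) = 2*d*d := by ring
    omega
  have hpoint : ∀ n, ∑ j ∈ range (d+1), a j * (δ n^i * (δ n^d)⁻¹ * F j n)
      = (∑ k ∈ range (d+1), ∑ m ∈ range M, (k.factorial : ℝ)⁻¹ *
          (δ n^i * (δ n^d)⁻¹ * (((pAux δ g d n)^k).coeff m * Dl m)))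
        + ∑ j ∈ range (d+1), a j * (δ n^i * (δ n^d)⁻¹ * (F j n - T j n)) := by
    intro n
    have hsplit : ∀ j ∈ range (d+1), a j * (δ n^i * (δ n^d)⁻¹ * F j n)
        = a j * (δ n^i * (δ n^d)⁻¹ * T j n)
          + a j * (δ n^i * (δ n^d)⁻¹ * (F j n - T j n)) := by
      intro j _; ring
    rw [Finset.sum_congr rfl hsplit, Finset.sum_add_distrib]
    congr 1
    have e1 : ∀ j ∈ range (d+1), a j * (δ n^i * (δ n^d)⁻¹ * T j n)
        = ∑ k ∈ range (d+1), (k.factorial:ℝ)⁻¹ *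
            (δ n^i * (δ n^d)⁻¹ * (∑ m ∈ range M, ((pAux δ g d n)^k).coeff m
              * (a j * (j:ℝ)^m))) := by
      intro j _
      have hTn : T j n = ∑ k ∈ range (d+1), (ψ j n)^k / (k.factorial : ℝ) := rfl
      rw [hTn, Finset.mul_sum, Finset.mul_sum]
      apply Finset.sum_congr rfl
      intro k hk
      have hev : (ψ j n)^k = ∑ m ∈ range M, ((pAux δ g d n)^k).coeff m * (j:ℝ)^m := by
        have hψn : ψ j n = (pAux δ g d n).eval (j:ℝ) := rfl
        rw [hψn, ← Polynomial.eval_pow]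
        exact Polynomial.eval_eq_sum_range'
          (hdeg n k (by have := Finset.mem_range.mp hk; omega)) _
      rw [hev, Finset.sum_div, Finset.mul_sum, Finset.mul_sum, Finset.mul_sum, Finset.mul_sum]
      apply Finset.sum_congr rfl
      intro m _
      rw [div_eq_mul_inv]
      ring
    rw [Finset.sum_congr rfl e1, Finset.sum_comm]
    apply Finset.sum_congr rfl
    intro k _
    calc ∑ j ∈ range (d+1), (k.factorial:ℝ)⁻¹ *
          (δ n^i * (δ n^d)⁻¹ * (∑ m ∈ range M, ((pAux δ g d n)^k).coeff m
            * (a j * (j:ℝ)^m)))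
        = ∑ j ∈ range (d+1), ∑ m ∈ range M, (k.factorial:ℝ)⁻¹ *
            (δ n^i * (δ n^d)⁻¹ * (((pAux δ g d n)^k).coeff m * (a j * (j:ℝ)^m))) := by
          apply Finset.sum_congr rfl
          intro j _
          rw [Finset.mul_sum, Finset.mul_sum]
      _ = ∑ m ∈ range M, ∑ j ∈ range (d+1), (k.factorial:ℝ)⁻¹ *
            (δ n^i * (δ n^d)⁻¹ * (((pAux δ g d n)^k).coeff m * (a j * (j:ℝ)^m))) :=
          Finset.sum_comm
      _ = ∑ m ∈ range M, (k.factorial : ℝ)⁻¹ *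
            (δ n^i * (δ n^d)⁻¹ * (((pAux δ g d n)^k).coeff m * Dl m)) := by
          apply Finset.sum_congr rfl
          intro m _
          have hDlm : Dl m = ∑ j ∈ range (d+1), a j * (j:ℝ)^m := rfl
          rw [hDlm, Finset.mul_sum, Finset.mul_sum, Finset.mul_sum]
  set τ : ℕ → ℕ → ℝ := fun k m => if m = d - i ∧ m = 2*k then
      (k.factorial:ℝ)⁻¹ * ((-1:ℝ)^k * Dl (d-i)) else 0 with hτ
  have hkm : ∀ k ∈ range (d+1), ∀ m ∈ range M, Tendsto (fun n => (k.factorial : ℝ)⁻¹ *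
      (δ n^i * (δ n^d)⁻¹ * (((pAux δ g d n)^k).coeff m * Dl m))) atTop (nhds (τ k m)) := by
    intro k hk m hm
    by_cases hmlt : m < d - i
    · have hDl0 : Dl m = 0 := by
        have hDlm : Dl m = ∑ j ∈ range (d+1), a j * (j:ℝ)^m := rfl
        rw [hDlm, ha]
        rw [delta_sum d i m hid (by omega), if_neg (by omega)]
      have hτ0 : τ k m = 0 := by
        rw [hτ]
        exact if_neg (by rintro ⟨h1, h2⟩; omega)
      rw [hτ0]
      simp only [hDl0, mul_zero]
      exact tendsto_const_nhds
    · push_neg at hmlt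
      have him : d ≤ i + m := by omega
      have t1 : Tendsto (fun n => (k.factorial : ℝ)⁻¹ * (δ n^i * (δ n^d)⁻¹ *
          ((((pAux δ g d n)^k).coeff m - (if m = 2*k then (-(δ n^2))^k else 0)) * Dl m)))
          atTop (nhds 0) := by
        have hlit := (pAux_coeff_littleO hδ hδ0 hg k m).const_mul_left (Dl m)
        have h := (tendsto_aux2 δ hδ hδ0 i m d him _ hlit).const_mul ((k.factorial : ℝ)⁻¹)
        rw [mul_zero] at h
        apply h.congr
        intro n; ring
      have t2 : Tendsto (fun n => (k.factorial : ℝ)⁻¹ * (δ n^i * (δ n^d)⁻¹ *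
          ((if m = 2*k then (-(δ n^2))^k else 0) * Dl m))) atTop (nhds (τ k m)) := by
        by_cases hm2 : m = 2*k
        · simp only [if_pos hm2]
          by_cases hmdi : m = d - i
          · have hτv : τ k m = (k.factorial:ℝ)⁻¹ * ((-1:ℝ)^k * Dl (d-i)) := by
              rw [hτ]; exact if_pos ⟨hmdi, hm2⟩
            rw [hτv]
            have hconst : ∀ n, (k.factorial : ℝ)⁻¹ * (δ n^i * (δ n^d)⁻¹ *
                ((-(δ n^2))^k * Dl m)) = (k.factorial:ℝ)⁻¹ * ((-1:ℝ)^k * Dl (d-i)) := by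
              intro n
              have h1 : (-(δ n^2))^k = (-1:ℝ)^k * δ n^(2*k) := by
                rw [neg_pow, ← pow_mul]
              have h2 : δ n^i * δ n^(2*k) = δ n^d := by
                rw [← pow_add]; congr 1; omega
              rw [h1, ← hmdi]
              calc (k.factorial : ℝ)⁻¹ * (δ n^i * (δ n^d)⁻¹ *
                  ((-1:ℝ)^k * δ n^(2*k) * Dl m))
                  = (k.factorial : ℝ)⁻¹ * ((-1:ℝ)^k * Dl m) *
                    ((δ n^i * δ n^(2*k)) * (δ n^d)⁻¹) := by ring
                _ = (k.factorial : ℝ)⁻¹ * ((-1:ℝ)^k * Dl m) := by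
                    rw [h2, mul_inv_cancel₀ (pow_ne_zero d (hδne n)), mul_one]
            simp only [hconst]
            exact tendsto_const_nhds
          · have hτ0 : τ k m = 0 := by
              rw [hτ]; exact if_neg (by rintro ⟨h1, _⟩; exact hmdi h1)
            rw [hτ0]
            have hpt : ∀ n, (k.factorial : ℝ)⁻¹ * (δ n^i * (δ n^d)⁻¹ *
                ((-(δ n^2))^k * Dl m))
                = ((k.factorial:ℝ)⁻¹ * ((-1:ℝ)^k * Dl m)) * δ n^(i+m-d) := by
              intro n
              have h1 : (-(δ n^2))^k = (-1:ℝ)^k * δ n^m := by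
                rw [neg_pow, ← pow_mul, ← hm2]
              rw [h1, pow_sub₀ (δ n) (hδne n) him, pow_add]
              field_simp
            simp only [hpt]
            have hgt : d < i + m := by omega
            have h := (hδ0.pow (i+m-d)).const_mul
              ((k.factorial:ℝ)⁻¹ * ((-1:ℝ)^k * Dl m))
            rw [zero_pow (by omega : i+m-d ≠ 0), mul_zero] at h
            exact h
        · simp only [if_neg hm2, zero_mul, mul_zero]
          have hτ0 : τ k m = 0 := by
            rw [hτ]; exact if_neg (by rintro ⟨_, h2⟩; exact hm2 h2)
          rw [hτ0]
          exact tendsto_const_nhds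
      have h := t1.add t2
      rw [zero_add] at h
      apply h.congr
      intro n; ring
  have hmainlim := tendsto_finset_sum (range (d+1))
    (fun k hk => tendsto_finset_sum (range M) (hkm k hk))
  have hdiM : d - i < M := by
    have h1 : d ≤ 2*d := by omega
    have h2 : 2*d ≤ 2*d*d := Nat.le_mul_of_pos_right _ (by omega)
    omega
  have hsum : ∑ k ∈ range (d+1), ∑ m ∈ range M, τ k m = hcoef d i := by
    have hsum1 : ∀ k ∈ range (d+1), ∑ m ∈ range M, τ k m
        = if d - i = 2*k then (k.factorial:ℝ)⁻¹ * ((-1:ℝ)^k * Dl (d-i)) else 0 := by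
      intro k _
      have h : ∀ m ∈ range M, τ k m = if m = d-i then
          (if d-i = 2*k then (k.factorial:ℝ)⁻¹ * ((-1:ℝ)^k * Dl (d-i)) else 0) else 0 := by
        intro m _
        simp only [hτ]
        by_cases h1 : m = d - i
        · by_cases h2 : m = 2*k
          · rw [if_pos ⟨h1, h2⟩, if_pos h1, if_pos (by omega : d - i = 2*k)]
          · rw [if_neg (by rintro ⟨_, hc⟩; exact h2 hc), if_pos h1,
              if_neg (by omega : ¬ d - i = 2*k)]
        · rw [if_neg (by rintro ⟨hc, _⟩; exact h1 hc), if_neg h1]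
      rw [Finset.sum_congr rfl h, Finset.sum_ite_eq' (range M) (d-i),
        if_pos (Finset.mem_range.mpr hdiM)]
    rw [Finset.sum_congr rfl hsum1]
    by_cases hpar : 2 ∣ (d - i)
    · obtain ⟨k0, hk0⟩ := hpar
      have h : ∀ k ∈ range (d+1), (if d - i = 2*k then
          (k.factorial:ℝ)⁻¹ * ((-1:ℝ)^k * Dl (d-i)) else 0)
          = if k = k0 then (k0.factorial:ℝ)⁻¹ * ((-1:ℝ)^k0 * Dl (d-i)) else 0 := by
        intro k _
        by_cases hkk : k = k0
        · subst hkk; rw [if_pos (by omega), if_pos rfl]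
        · rw [if_neg (by omega), if_neg hkk]
      rw [Finset.sum_congr rfl h, Finset.sum_ite_eq' (range (d+1)) k0,
        if_pos (Finset.mem_range.mpr (by omega))]
      rw [hcoef_eq d i k0 (by omega)]
      have hDlv : Dl (d-i) = (d.choose i : ℝ) * ((-1:ℝ)^(d-i) * ((d-i).factorial : ℝ)) := by
        have hDlm : Dl (d-i) = ∑ j ∈ range (d+1), a j * (j:ℝ)^(d-i) := rfl
        rw [hDlm, ha]
        rw [delta_sum d i (d-i) hid le_rfl, if_pos rfl]
      rw [hDlv, hk0]
      have hneg1 : (-1:ℝ)^(2*k0) = 1 := by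
        rw [pow_mul]; norm_num
      rw [hneg1, div_eq_mul_inv]
      ring
    · have h : ∀ k ∈ range (d+1), (if d - i = 2*k then
          (k.factorial:ℝ)⁻¹ * ((-1:ℝ)^k * Dl (d-i)) else 0) = 0 := by
        intro k _
        exact if_neg (by omega)
      rw [Finset.sum_congr rfl h, Finset.sum_const_zero, hcoef_eq_zero d i (by omega)]
  rw [hsum] at hmainlim
  have hfinal := hmainlim.add hrem
  rw [add_zero] at hfinal
  exact hfinal.congr (fun n => (hpoint n).symm)
end
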